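/- For α > −1 and n ≥ 1, if a real polynomial p has only positive zeros, then the polynomial Ω_α p(x) = −(d/dx)(α p(x) + x p'(x)) has only positive zeros. -/

import Mathlib

open Polynomial Finset

private lemma sum_count_le' (F : Finset ℝ) (μ : Multiset ℝ) :
    ∑ x ∈ F, μ.count x ≤ Multiset.card μ := by
  classical
  calc ∑ x ∈ F, μ.count x ≤ ∑ x ∈ F ∪ μ.toFinset, μ.count x :=
        Finset.sum_le_sum_of_subset Finset.subset_union_left
    _ = ∑ x ∈ μ.toFinset, μ.count x := by
        refine (Finset.sum_subset Finset.subset_union_right fun x _ hx => ?_).symm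
        exact Multiset.count_eq_zero.2 fun h => hx (Multiset.mem_toFinset.2 h)
    _ = Multiset.card μ := Multiset.toFinset_sum_count_eq μ

private lemma key_count (r q : Polynomial ℝ) (hq : q ≠ 0) (hrpos : ∀ t ∈ r.roots, 0 < t)
    (s : Finset ℝ) (hsub : r.roots.toFinset ⊆ s) (hs0 : ∀ x ∈ s, 0 ≤ x)
    (hmult : ∀ x ∈ r.roots.toFinset, r.rootMultiplicity x - 1 ≤ q.rootMultiplicity x)
    (hrolle : ∀ x ∈ s, ∀ y ∈ s, x < y → ∃ z ∈ Set.Ioo x y, q.IsRoot z) :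
    Multiset.card r.roots + s.card ≤
      Multiset.card (q.roots.filter (fun t => 0 < t)) + r.roots.toFinset.card + 1 := by
  classical
  set T := r.roots.toFinset with hT
  set t := (q.roots.toFinset).filter (fun z => 0 < z) with ht
  set cnt := q.roots.filter (fun z => 0 < z) with hcnt
  have h1 : s.card ≤ (t \ s).card + 1 := by
    refine Finset.card_le_diff_of_interleaved fun x hx y hy hxy _ => ?_
    obtain ⟨z, hz, hzq⟩ := hrolle x hx y hy hxy
    have hz0 : 0 < z := lt_of_le_of_lt (hs0 x hx) hz.1
    exact ⟨z, Finset.mem_filter.2 ⟨Multiset.mem_toFinset.2 ((mem_roots hq).2 hzq), hz0⟩,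
      hz.1, hz.2⟩
  have h2 : ∀ x ∈ T, Multiset.count x r.roots ≤ Multiset.count x cnt + 1 := by
    intro x hx
    have hx0 : 0 < x := hrpos x (Multiset.mem_toFinset.1 hx)
    rw [hcnt, Multiset.count_filter, if_pos hx0, count_roots, count_roots]
    have := hmult x hx
    omega
  have h3 : ∀ x ∈ t \ s, 1 ≤ Multiset.count x cnt := by
    intro x hx
    obtain ⟨hxt, -⟩ := Finset.mem_sdiff.1 hx
    obtain ⟨hxq, hx0⟩ := Finset.mem_filter.1 hxt
    rw [hcnt, Multiset.count_filter, if_pos hx0]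
    exact Multiset.count_pos.2 (Multiset.mem_toFinset.1 hxq)
  have hdisj : Disjoint T (t \ s) :=
    Disjoint.mono_left hsub Finset.sdiff_disjoint.symm
  calc Multiset.card r.roots + s.card
      = ∑ x ∈ T, Multiset.count x r.roots + s.card := by
        rw [hT, Multiset.toFinset_sum_count_eq]
    _ ≤ ∑ x ∈ T, (Multiset.count x cnt + 1) + s.card :=
        add_le_add_left (Finset.sum_le_sum h2) _
    _ = ∑ x ∈ T, Multiset.count x cnt + T.card + s.card := by
        rw [Finset.sum_add_distrib, Finset.sum_const, smul_eq_mul, mul_one]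
    _ ≤ ∑ x ∈ T, Multiset.count x cnt + T.card + ((t \ s).card + 1) :=
        add_le_add_right h1 _
    _ ≤ ∑ x ∈ T, Multiset.count x cnt + T.card + ((∑ x ∈ t \ s, Multiset.count x cnt) + 1) := by
        refine add_le_add_right (add_le_add_left ?_ 1) _
        calc (t \ s).card = ∑ _x ∈ t \ s, 1 := by simp
          _ ≤ ∑ x ∈ t \ s, Multiset.count x cnt := Finset.sum_le_sum h3
    _ = (∑ x ∈ T ∪ (t \ s), Multiset.count x cnt) + T.card + 1 := by
        rw [Finset.sum_union hdisj]; ring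
    _ ≤ Multiset.card cnt + T.card + 1 :=
        add_le_add_left (add_le_add_left (sum_count_le' _ _) _) _

/-- If all roots of `r` are real and positive and `β > 0`, then all roots of
`β r + x r'` are real and positive. -/
private lemma lemA (β : ℝ) (hβ : 0 < β) (r : Polynomial ℝ) (hr0 : r ≠ 0)
    (hcard : Multiset.card r.roots = r.natDegree) (hpos : ∀ t ∈ r.roots, 0 < t) :
    Multiset.card (C β * r + X * derivative r).roots = (C β * r + X * derivative r).natDegree ∧
    ∀ t ∈ (C β * r + X * derivative r).roots, 0 < t := by
  classical
  rcases Nat.eq_zero_or_pos r.natDegree with hm | hm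
  · -- constant case
    have hrC : r = C (r.coeff 0) := eq_C_of_natDegree_eq_zero hm
    have hc0 : r.coeff 0 ≠ 0 := by
      intro h; apply hr0; rw [hrC, h, map_zero]
    have : C β * r + X * derivative r = C (β * r.coeff 0) := by
      rw [hrC]; simp [mul_comm]
    rw [this]
    constructor
    · simp only [roots_C, natDegree_C, Multiset.card_zero]
    · intro t htr
      rw [roots_C] at htr
      exact absurd htr (Multiset.notMem_zero t)
  · obtain ⟨k, hk⟩ : ∃ k, r.natDegree = k + 1 := ⟨r.natDegree - 1, by omega⟩
    set q : Polynomial ℝ := C β * r + X * derivative r with hqdef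
    have hlc : r.coeff (k + 1) ≠ 0 := by
      rw [← hk]; exact fun h => hr0 (leadingCoeff_eq_zero.1 h)
    have hcoeff : q.coeff (k + 1) = (β + (k + 1)) * r.coeff (k + 1) := by
      rw [hqdef, coeff_add, coeff_C_mul, coeff_X_mul, coeff_derivative]
      ring
    have hcne : q.coeff (k + 1) ≠ 0 := by
      rw [hcoeff]
      refine mul_ne_zero ?_ hlc
      positivity
    have hdle : q.natDegree ≤ k + 1 := by
      refine natDegree_add_le_of_degree_le ((natDegree_C_mul_le β r).trans hk.le) ?_
      refine natDegree_mul_le.trans ?_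
      have h1 : (X : Polynomial ℝ).natDegree ≤ 1 := natDegree_X_le
      have h2 : (derivative r).natDegree ≤ k := (natDegree_derivative_le r).trans (by omega)
      omega
    have hdq : q.natDegree = k + 1 := natDegree_eq_of_le_of_coeff_ne_zero hdle hcne
    have hq0 : q ≠ 0 := fun h => hcne (by rw [h, coeff_zero])
    -- multiplicity bound
    have hmult : ∀ x ∈ r.roots.toFinset, r.rootMultiplicity x - 1 ≤ q.rootMultiplicity x := by
      intro x hx
      rw [le_rootMultiplicity_iff hq0]
      refine dvd_add ?_ ?_
      · exact ((pow_dvd_pow _ (Nat.sub_le _ _)).trans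
          (pow_rootMultiplicity_dvd r x)).mul_left (C β)
      · exact Dvd.dvd.mul_left
          ((pow_dvd_pow _ (r.rootMultiplicity_sub_one_le_derivative_rootMultiplicity x)).trans
            (pow_rootMultiplicity_dvd (derivative r) x)) X
    set s : Finset ℝ := insert 0 r.roots.toFinset with hs
    have h0notin : (0 : ℝ) ∉ r.roots.toFinset := by
      intro h
      exact absurd (hpos 0 (Multiset.mem_toFinset.1 h)) (lt_irrefl 0)
    have hscard : s.card = r.roots.toFinset.card + 1 := Finset.card_insert_of_notMem h0notin
    have hs0 : ∀ x ∈ s, 0 ≤ x := by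
      intro x hx
      rcases Finset.mem_insert.1 hx with h | h
      · exact h.ge
      · exact (hpos x (Multiset.mem_toFinset.1 h)).le
    -- Rolle with weight x^β
    have hrolle : ∀ x ∈ s, ∀ y ∈ s, x < y → ∃ z ∈ Set.Ioo x y, q.IsRoot z := by
      intro x hx y hy hxy
      set g : ℝ → ℝ := fun z => z ^ β * r.eval z with hg
      have hgz : ∀ w ∈ s, g w = 0 := by
        intro w hw
        rcases Finset.mem_insert.1 hw with h | h
        · rw [hg]; simp [h, Real.zero_rpow hβ.ne']
        · have : r.eval w = 0 := (mem_roots hr0).1 (Multiset.mem_toFinset.1 h)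
          rw [hg]; simp [this]
      have hgc : Continuous g := by
        refine Continuous.mul ?_ r.continuous
        exact continuous_iff_continuousAt.2 fun x =>
          Real.continuousAt_rpow_const x β (Or.inr hβ.le)
      obtain ⟨z, hz, hdz⟩ := exists_deriv_eq_zero hxy hgc.continuousOn
        ((hgz x hx).trans (hgz y hy).symm)
      have hz0 : 0 < z := lt_of_le_of_lt (hs0 x hx) hz.1
      have hD : HasDerivAt g (β * z ^ (β - 1) * r.eval z + z ^ β * (derivative r).eval z) z :=
        (Real.hasDerivAt_rpow_const (Or.inl hz0.ne')).mul (r.hasDerivAt z)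
      have hD0 : β * z ^ (β - 1) * r.eval z + z ^ β * (derivative r).eval z = 0 := by
        rw [← hD.deriv]; exact hdz
      have hzb : z ^ β = z ^ (β - 1) * z := by
        conv_lhs => rw [show β = (β - 1) + 1 by ring, Real.rpow_add hz0, Real.rpow_one]
      have hfact : z ^ (β - 1) * (β * r.eval z + z * (derivative r).eval z) = 0 := by
        rw [← hD0, hzb]; ring
      have hqz : q.eval z = 0 := by
        have hpow : z ^ (β - 1) ≠ 0 := (Real.rpow_pos_of_pos hz0 _).ne'
        have := (mul_eq_zero.1 hfact).resolve_left hpow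
        rw [hqdef]; simpa using this
      exact ⟨z, hz, hqz⟩
    have hkey := key_count r q hq0 hpos s (Finset.subset_insert _ _) hs0 hmult hrolle
    rw [hscard] at hkey
    have hle : Multiset.card (q.roots.filter (fun t => 0 < t)) ≤ Multiset.card q.roots :=
      Multiset.card_le_card (Multiset.filter_le _ _)
    have hub : Multiset.card q.roots ≤ k + 1 := hdq ▸ (card_roots' q)
    have hcard' : Multiset.card q.roots = q.natDegree := by
      rw [hdq]; omega
    refine ⟨hcard', fun t ht => ?_⟩
    have heq : q.roots.filter (fun t => 0 < t) = q.roots := by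
      refine Multiset.eq_of_le_of_card_le (Multiset.filter_le _ _) ?_
      omega
    rw [← heq] at ht
    exact (Multiset.mem_filter.1 ht).2

/-- The derivative of a polynomial with all roots real and positive again has all roots
real and positive. -/
private lemma lemB (p : Polynomial ℝ) (hdeg : 1 ≤ p.natDegree)
    (hreal : Multiset.card p.roots = p.natDegree) (hpos : ∀ t ∈ p.roots, 0 < t) :
    Multiset.card (derivative p).roots = (derivative p).natDegree ∧
    (derivative p).natDegree = p.natDegree - 1 ∧
    ∀ t ∈ (derivative p).roots, 0 < t := by
  classical
  have hp0 : p ≠ 0 := fun h => by simp [h] at hdeg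
  have hp'0 : derivative p ≠ 0 := by
    intro h
    have := eq_C_of_derivative_eq_zero h
    rw [this] at hdeg
    simp at hdeg
  have hrolle : ∀ x ∈ p.roots.toFinset, ∀ y ∈ p.roots.toFinset, x < y →
      ∃ z ∈ Set.Ioo x y, (derivative p).IsRoot z := by
    intro x hx y hy hxy
    have hxr : p.eval x = 0 := (mem_roots hp0).1 (Multiset.mem_toFinset.1 hx)
    have hyr : p.eval y = 0 := (mem_roots hp0).1 (Multiset.mem_toFinset.1 hy)
    obtain ⟨z, hz, hdz⟩ := exists_deriv_eq_zero hxy p.continuousOn (hxr.trans hyr.symm)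
    exact ⟨z, hz, by rwa [IsRoot, ← p.deriv]⟩
  have hkey := key_count p (derivative p) hp'0 hpos p.roots.toFinset (le_refl _)
    (fun x hx => (hpos x (Multiset.mem_toFinset.1 hx)).le)
    (fun x _ => p.rootMultiplicity_sub_one_le_derivative_rootMultiplicity x) hrolle
  have hle : Multiset.card ((derivative p).roots.filter (fun t => 0 < t)) ≤
      Multiset.card (derivative p).roots := Multiset.card_le_card (Multiset.filter_le _ _)
  have hub : Multiset.card (derivative p).roots ≤ (derivative p).natDegree :=
    card_roots' _
  have hub2 : (derivative p).natDegree ≤ p.natDegree - 1 := natDegree_derivative_le p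
  have hnd : (derivative p).natDegree = p.natDegree - 1 := by omega
  have hcard : Multiset.card (derivative p).roots = (derivative p).natDegree := by omega
  refine ⟨hcard, hnd, fun t ht => ?_⟩
  have heq : (derivative p).roots.filter (fun t => 0 < t) = (derivative p).roots := by
    refine Multiset.eq_of_le_of_card_le (Multiset.filter_le _ _) ?_
    omega
  rw [← heq] at ht
  exact (Multiset.mem_filter.1 ht).2

/-- For `α > -1`, if a real polynomial `p` of degree at least 1 has only positive zeros,
then `Ω_α p = -(α p + x p')'` has only positive zeros. -/
theorem stmt_18 (α : ℝ) (hα : -1 < α) (p : Polynomial ℝ) (hdeg : 1 ≤ p.natDegree)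
    (hreal : p.roots.card = p.natDegree) (hpos : ∀ t ∈ p.roots, 0 < t) :
    (-(Polynomial.derivative
        (Polynomial.C α * p + Polynomial.X * Polynomial.derivative p))).roots.card
      = (-(Polynomial.derivative
        (Polynomial.C α * p + Polynomial.X * Polynomial.derivative p))).natDegree ∧
    ∀ t ∈ (-(Polynomial.derivative
        (Polynomial.C α * p + Polynomial.X * Polynomial.derivative p))).roots, 0 < t := by
  obtain ⟨hc, hnd, hp'pos⟩ := lemB p hdeg hreal hpos
  have hp'0 : derivative p ≠ 0 := by
    intro h
    have := eq_C_of_derivative_eq_zero h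
    rw [this] at hdeg
    simp at hdeg
  have hβ : (0 : ℝ) < α + 1 := by linarith
  obtain ⟨h1, h2⟩ := lemA (α + 1) hβ (derivative p) hp'0 hc hp'pos
  have heq : derivative (C α * p + X * derivative p)
      = C (α + 1) * derivative p + X * derivative (derivative p) := by
    rw [derivative_add, derivative_C_mul, derivative_mul, derivative_X, C_add, C_1]
    ring
  constructor
  · rw [roots_neg, natDegree_neg, heq]
    exact h1
  · intro t ht
    rw [roots_neg, heq] at ht
    exact h2 t ht
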